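/- Let H ≤ GL(n, F) be a unipotent subgroup. Then the F-linear span of {h − 1 : h ∈ H} is closed under multiplication, i.e., it is a (non-unital) subalgebra of Mat(n, F), and moreover this subalgebra is nilpotent of index at most n. -/

import Mathlib

open Module LinearMap Submodule

open Module LinearMap Submodule

section Burnside
variable {K : Type*} [Field K] [IsAlgClosed K]
variable {V : Type*} [AddCommGroup V] [Module K V] [FiniteDimensional K V]

/-- evaluation at a vector, as a linear map on endomorphisms -/
private def evAt (v : V) : Module.End K V →ₗ[K] V where
  toFun f := f v
  map_add' f g := rfl
  map_smul' c f := rfl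

lemma burnside_transitive (A : Subalgebra K (Module.End K V))
    (hirr : ∀ U : Submodule K V, (∀ a ∈ A, ∀ v ∈ U, a v ∈ U) → U = ⊥ ∨ U = ⊤)
    {v : V} (hv : v ≠ 0) (w : V) : ∃ a ∈ A, a v = w := by
  set U : Submodule K V := (Subalgebra.toSubmodule A).map (evAt v) with hUdef
  have hU : ∀ a ∈ A, ∀ x ∈ U, a x ∈ U := by
    rintro a ha x hx
    obtain ⟨b, hb, rfl⟩ := hx
    exact ⟨a * b, A.mul_mem ha hb, rfl⟩
  rcases hirr U hU with h | h
  · exfalso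
    have h1 : v ∈ U := ⟨1, A.one_mem, rfl⟩
    rw [h] at h1
    exact hv (by simpa using h1)
  · have hw : w ∈ U := h ▸ Submodule.mem_top
    obtain ⟨a, ha, hav⟩ := hw
    exact ⟨a, ha, hav⟩

end Burnside

section Burnside2
variable {K : Type*} [Field K] [IsAlgClosed K]
variable {V : Type*} [AddCommGroup V] [Module K V] [FiniteDimensional K V]

lemma burnside_rank_one (A : Subalgebra K (Module.End K V))
    (hirr : ∀ U : Submodule K V, (∀ a ∈ A, ∀ v ∈ U, a v ∈ U) → U = ⊥ ∨ U = ⊤)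
    (hV : 0 < finrank K V) :
    ∃ a ∈ A, a ≠ 0 ∧ finrank K (LinearMap.range a) = 1 := by
  have : Nontrivial V := Module.nontrivial_of_finrank_pos hV
  have hone : (1 : Module.End K V) ≠ 0 := by
    intro h
    obtain ⟨v, hv⟩ := exists_ne (0 : V)
    exact hv (by simpa using congrFun (congrArg DFunLike.coe h) v)
  set T : Set ℕ := {r | ∃ a ∈ A, a ≠ 0 ∧ finrank K (LinearMap.range a) = r} with hT
  have hTne : T.Nonempty := ⟨_, 1, A.one_mem, hone, rfl⟩
  obtain ⟨a, haA, ha0, har⟩ := Nat.sInf_mem hTne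
  set r := sInf T with hr
  have hrpos : 0 < r := by
    rcases Nat.eq_zero_or_pos r with h | h
    · exfalso
      rw [h] at har
      have : LinearMap.range a = ⊥ := Submodule.finrank_eq_zero.mp har
      exact ha0 (LinearMap.range_eq_bot.mp this)
    · exact h
  -- suppose r ≥ 2, derive contradiction
  by_contra hcon
  push_neg at hcon
  have hr1 : r ≠ 1 := fun h => hcon a haA ha0 (har.trans h)
  have hr2 : 2 ≤ r := by omega
  -- find u w with a u, a w linearly independent
  have hW2 : 2 ≤ finrank K (LinearMap.range a) := har ▸ hr2
  obtain ⟨u, w, hindep⟩ : ∃ u w : V, LinearIndependent K ![a u, a w] := by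
    by_contra hno
    push_neg at hno
    -- then rank ≤ 1
    have : finrank K (LinearMap.range a) ≤ 1 := by
      obtain ⟨v0, hv0⟩ : ∃ v0, a v0 ≠ 0 := by
        by_contra hall
        push_neg at hall
        exact ha0 (LinearMap.ext fun v => hall v)
      apply finrank_le_one ⟨a v0, LinearMap.mem_range_self a v0⟩
      rintro ⟨x, hx⟩
      obtain ⟨v, rfl⟩ := hx
      have hdep := hno v0 v
      rw [LinearIndependent.pair_iff' hv0] at hdep
      push_neg at hdep
      obtain ⟨c, hc⟩ := hdep
      exact ⟨c, by ext; simp [hc]⟩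
    omega
  have hau : a u ≠ 0 := fun h => by
    have := hindep.ne_zero 0
    simp [h] at this
  obtain ⟨b, hbA, hb⟩ := burnside_transitive A hirr hau w
  -- eigenvalue of (a*b) restricted to range a
  have hmapsTo : Set.MapsTo (a * b) (LinearMap.range a) (LinearMap.range a) := by
    rintro x -
    exact LinearMap.mem_range_self a (b x)
  set φ : Module.End K (LinearMap.range a) := (a * b).restrict hmapsTo with hφ
  have : Nontrivial (LinearMap.range a) := by
    rw [Submodule.nontrivial_iff_ne_bot]
    intro h
    exact ha0 (LinearMap.range_eq_bot.mp h)
  obtain ⟨μ, hμ⟩ := Module.End.exists_eigenvalue φ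
  obtain ⟨⟨x, hxmem⟩, hxeig, hxne⟩ := hμ.exists_hasEigenvector
  -- e := a*b*a - μ • a
  set e : Module.End K V := a * b * a - μ • a with he
  have heA : e ∈ A := A.sub_mem (A.mul_mem (A.mul_mem haA hbA) haA) (A.smul_mem haA μ)
  have habx : (a * b) x = μ • x := by
    have h1 := Module.End.mem_eigenspace_iff.mp hxeig
    have := congrArg (Subtype.val) h1
    exact this
  have hene : e ≠ 0 := by
    intro h
    have : a w - μ • a u = 0 := by
      have := congrFun (congrArg DFunLike.coe h) u
      simpa [e, hb, Module.End.mul_apply, sub_eq_zero] using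
        (by simpa [e, Module.End.mul_apply, hb] using congrFun (congrArg DFunLike.coe h) u : 
          a (b (a u)) - μ • a u = (0 : V))
    rw [sub_eq_zero] at this
    have h2 := hindep
    rw [LinearIndependent.pair_iff] at h2
    have := h2 (-μ) 1 (by rw [this]; module)
    simp at this
  -- rank of e is smaller
  have hrange : finrank K (LinearMap.range e) < r := by
    set ψ : (LinearMap.range a) →ₗ[K] V := ((a * b) - μ • 1) ∘ₗ (LinearMap.range a).subtype with hψ
    have hsub : LinearMap.range e ≤ LinearMap.range ψ := by
      rintro y ⟨v, rfl⟩
      exact ⟨⟨a v, LinearMap.mem_range_self a v⟩, by simp [ψ, e, Module.End.mul_apply]⟩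
    have hkerψ : (⟨x, hxmem⟩ : LinearMap.range a) ∈ LinearMap.ker ψ := by
      simp only [LinearMap.mem_ker, hψ, LinearMap.comp_apply]
      show ((a*b) - μ • 1) x = 0
      simp [habx, sub_eq_zero]
    have hkerpos : 0 < finrank K (LinearMap.ker ψ) := by
      apply Module.finrank_pos_iff.mpr
      exact ⟨⟨⟨⟨x, hxmem⟩, hkerψ⟩, 0, by simp [hxne]⟩⟩
    have hrn := LinearMap.finrank_range_add_finrank_ker ψ
    have : finrank K (LinearMap.range ψ) < finrank K (LinearMap.range a) := by omega
    calc finrank K (LinearMap.range e) ≤ finrank K (LinearMap.range ψ) :=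
          Submodule.finrank_mono hsub
      _ < r := by omega
  have : r ≤ finrank K (LinearMap.range e) := Nat.sInf_le ⟨e, heA, hene, rfl⟩
  omega

end Burnside2

section Burnside3
variable {K : Type*} [Field K] [IsAlgClosed K]
variable {V : Type*} [AddCommGroup V] [Module K V] [FiniteDimensional K V]

theorem burnside (A : Subalgebra K (Module.End K V))
    (hirr : ∀ U : Submodule K V, (∀ a ∈ A, ∀ v ∈ U, a v ∈ U) → U = ⊥ ∨ U = ⊤)
    (hV : 0 < finrank K V) : A = ⊤ := by
  have : Nontrivial V := Module.nontrivial_of_finrank_pos hV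
  obtain ⟨a, haA, ha0, har⟩ := burnside_rank_one A hirr hV
  -- u0 spans range a
  obtain ⟨u0, hu0ne, hu0mem, hu0span⟩ : ∃ u0 : V, u0 ≠ 0 ∧ u0 ∈ LinearMap.range a ∧
      ∀ w ∈ LinearMap.range a, ∃ c : K, c • u0 = w := by
    obtain ⟨v, hvne, hv⟩ := finrank_eq_one_iff'.mp har
    refine ⟨(v : V), fun h => hvne (Subtype.ext h), v.2, fun w hw => ?_⟩
    obtain ⟨c, hc⟩ := hv ⟨w, hw⟩
    exact ⟨c, congrArg Subtype.val hc⟩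
  -- define f0 : V →ₗ[K] K with a v = f0 v • u0
  set es := LinearEquiv.toSpanNonzeroSingleton K V u0 hu0ne with hes
  have hcod : ∀ v : V, a v ∈ Submodule.span K {u0} := by
    intro v
    obtain ⟨c, hc⟩ := hu0span (a v) (LinearMap.mem_range_self a v)
    rw [← hc]
    exact Submodule.smul_mem _ c (Submodule.mem_span_singleton_self u0)
  set f0 : V →ₗ[K] K := es.symm.toLinearMap ∘ₗ (a.codRestrict (Submodule.span K {u0}) hcod)
    with hf0
  have hf0a : ∀ v : V, f0 v • u0 = a v := by
    intro v
    have h1 : es (f0 v) = a.codRestrict (Submodule.span K {u0}) hcod v := by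
      simp [hf0]
    have h2 := congrArg Subtype.val h1
    simpa [es, LinearEquiv.toSpanNonzeroSingleton] using h2
  -- every rank-one map smulRight f u is in A
  have hrankone : ∀ (f : V →ₗ[K] K) (u : V), (LinearMap.smulRight f u : Module.End K V) ∈ A := by
    intro f u
    rcases eq_or_ne u 0 with rfl | hu
    · have : (LinearMap.smulRight f (0 : V) : Module.End K V) = 0 := by ext v; simp
      rw [this]; exact A.zero_mem
    obtain ⟨b, hbA, hb⟩ := burnside_transitive A hirr hu0ne u
    -- find c ∈ A with f0 ∘ c = f
    have hΦ : ∀ φ : V →ₗ[K] K, ∃ c ∈ A, f0 ∘ₗ (c : Module.End K V) = φ := by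
      -- the set of f0 ∘ c is a submodule of the dual, with trivial coannihilator
      set compf0 : Module.End K V →ₗ[K] (V →ₗ[K] K) :=
        { toFun := fun c => f0 ∘ₗ c
          map_add' := fun c d => by ext v; simp
          map_smul' := fun t c => by ext v; simp } with hcompf0
      set Φ : Submodule K (V →ₗ[K] K) := (Subalgebra.toSubmodule A).map compf0 with hΦdef
      have hf0ne : ∃ v0 : V, f0 v0 ≠ 0 := by
        obtain ⟨v0, hv0⟩ := hu0mem
        refine ⟨v0, ?_⟩
        have := hf0a v0
        rw [hv0] at this
        intro h
        rw [h, zero_smul] at this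
        exact hu0ne this.symm
      obtain ⟨v0, hv0⟩ := hf0ne
      have hspan : Submodule.span K (Φ : Set (V →ₗ[K] K)) = ⊤ := by
        apply Submodule.span_eq_top_of_ne_zero
        intro z hz
        obtain ⟨c, hcA, hc⟩ := burnside_transitive A hirr hz v0
        refine ⟨f0 ∘ₗ c, ⟨c, hcA, rfl⟩, ?_⟩
        simpa [hc] using hv0
      rw [Submodule.span_eq] at hspan
      intro φ
      have : φ ∈ Φ := hspan ▸ Submodule.mem_top
      obtain ⟨c, hcA, hcφ⟩ := this
      exact ⟨c, hcA, hcφ⟩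
    obtain ⟨c, hcA, hc⟩ := hΦ f
    have : (LinearMap.smulRight f u : Module.End K V) = b * a * c :=  by
      ext v
      have h1 : f v = f0 (c v) := by rw [← hc]; rfl
      simp only [LinearMap.smulRight_apply, Module.End.mul_apply, h1]
      rw [← hf0a (c v)]
      simp [hb, map_smul]
    rw [this]
    exact A.mul_mem (A.mul_mem hbA haA) hcA
  -- all endomorphisms are sums of rank-one maps
  rw [Algebra.eq_top_iff]
  intro x
  set bV := Module.finBasis K V with hbV
  have hx : x = ∑ i, (LinearMap.smulRight (bV.coord i) (x (bV i)) : Module.End K V) := by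
    ext v
    rw [LinearMap.sum_apply]
    simp only [LinearMap.smulRight_apply, Basis.coord_apply]
    simp_rw [← map_smul x, ← map_sum, Basis.sum_repr]
  rw [hx]
  exact A.sum_mem (fun i _ => hrankone _ _)

end Burnside3

section Trace
variable {K : Type*} [Field K] [IsAlgClosed K]
variable {V : Type*} [AddCommGroup V] [Module K V] [FiniteDimensional K V]

/-- In the irreducible case, a multiplicatively closed set of unipotent endomorphisms
is trivial. -/
lemma irreducible_unipotent_eq_one (G : Set (Module.End K V))
    (hmul : ∀ g ∈ G, ∀ h ∈ G, g * h ∈ G)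
    (hnil : ∀ g ∈ G, IsNilpotent (g - 1))
    (hirr : ∀ U : Submodule K V, (∀ g ∈ G, ∀ v ∈ U, g v ∈ U) → U = ⊥ ∨ U = ⊤)
    (hV : 0 < finrank K V) :
    ∀ g ∈ G, g = 1 := by
  intro g hg
  set A := Algebra.adjoin K G with hA
  have hAirr : ∀ U : Submodule K V, (∀ a ∈ A, ∀ v ∈ U, a v ∈ U) → U = ⊥ ∨ U = ⊤ := by
    intro U hU
    exact hirr U (fun g' hg' => hU g' (Algebra.subset_adjoin hg'))
  have hAtop : A = ⊤ := burnside A hAirr hV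
  -- trace of nilpotent endo is zero
  have htr0 : ∀ x : Module.End K V, IsNilpotent x → LinearMap.trace K V x = 0 := fun x hx =>
    (LinearMap.isNilpotent_trace_of_isNilpotent hx).eq_zero
  -- closure elements are 1 or in G
  have hclos : ∀ m ∈ Submonoid.closure G, m = 1 ∨ m ∈ G := by
    intro m hm
    induction hm using Submonoid.closure_induction with
    | mem x hx => exact Or.inr hx
    | one => exact Or.inl rfl
    | mul x y _ _ hx hy =>
      rcases hx with rfl | hx
      · rcases hy with rfl | hy
        · exact Or.inl (one_mul 1)
        · rw [one_mul]; exact Or.inr hy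
      · rcases hy with rfl | hy
        · rw [mul_one]; exact Or.inr hx
        · exact Or.inr (hmul x hx y hy)
  -- the linear functional x ↦ trace ((g-1) * x) vanishes identically
  have hvanish : ∀ x : Module.End K V, LinearMap.trace K V ((g - 1) * x) = 0 := by
    have hspan : (⊤ : Submodule K (Module.End K V)) =
        Submodule.span K (Submonoid.closure G : Set (Module.End K V)) := by
      rw [← Algebra.adjoin_eq_span, ← hA, hAtop]; rfl
    intro x
    have hx : x ∈ Submodule.span K (Submonoid.closure G : Set (Module.End K V)) :=
      hspan ▸ Submodule.mem_top
    set L : Module.End K V →ₗ[K] K :=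
      (LinearMap.trace K V) ∘ₗ (LinearMap.mulLeft K (g - 1)) with hL
    have hLx : L x = 0 := by
      induction hx using Submodule.span_induction with
      | mem m hm =>
        have htrg : ∀ h' ∈ G, LinearMap.trace K V h' = finrank K V := by
          intro h' hh'
          have : h' = (h' - 1) + 1 := by abel
          rw [this, map_add, htr0 _ (hnil h' hh'), LinearMap.trace_one, zero_add]
        rcases hclos m hm with rfl | hmG
        · simp only [hL, LinearMap.comp_apply, LinearMap.mulLeft_apply, mul_one]
          exact htr0 _ (hnil g hg)
        · simp only [hL, LinearMap.comp_apply, LinearMap.mulLeft_apply]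
          rw [sub_mul, one_mul, map_sub, htrg _ (hmul g hg m hmG), htrg _ hmG, sub_self]
      | zero => simp [hL]
      | add a b _ _ ha hb => rw [map_add, ha, hb, add_zero]
      | smul c a _ ha => rw [map_smul, ha, smul_zero]
    simpa [hL] using hLx
  -- nondegeneracy of the trace form
  have : g - 1 = 0 := by
    set bV := Module.finBasis K V with hbV
    set M := LinearMap.toMatrix bV bV (g - 1) with hM
    have hMN : ∀ N : Matrix (Fin (finrank K V)) (Fin (finrank K V)) K, (M * N).trace = 0 := by
      intro N
      have := hvanish ((Matrix.toLin bV bV) N)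
      rw [LinearMap.trace_eq_matrix_trace K bV, LinearMap.toMatrix_mul bV] at this
      rwa [← hM, LinearMap.toMatrix_toLin bV bV] at this
    have hM0 : M = 0 := by
      ext i j
      have := hMN (Matrix.single j i 1)
      rw [Matrix.trace_mul_comm] at this
      rw [Matrix.zero_apply]
      rw [← this]
      simp [Matrix.trace, Matrix.mul_apply, Matrix.single, Matrix.diag, ite_and,
        Finset.sum_ite_eq, Finset.sum_ite_eq']
    have := congrArg (Matrix.toLin bV bV) (hM0)
    rwa [hM, Matrix.toLin_toMatrix, map_zero] at this
  rwa [sub_eq_zero] at this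

end Trace

section Main
universe v
variable {K : Type*} [Field K] [IsAlgClosed K]

lemma main_induction (d : ℕ) :
    ∀ (V : Type v) [AddCommGroup V] [Module K V] [FiniteDimensional K V]
      (G : Set (Module.End K V)),
    (∀ g ∈ G, ∀ h ∈ G, g * h ∈ G) →
    (∀ g ∈ G, IsNilpotent (g - 1)) →
    finrank K V ≤ d →
    ∀ l : List (Module.End K V),
      (∀ x ∈ l, x ∈ Submodule.span K ((fun g => g - 1) '' G)) →
      finrank K V ≤ l.length → l.prod = 0 := by
  induction d with
  | zero =>
    intro V _ _ _ G hmul hnil hd l hl hlen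
    have h0 : finrank K V = 0 := Nat.le_zero.mp hd
    have : Subsingleton V := finrank_zero_iff.mp h0
    exact LinearMap.ext fun v => Subsingleton.elim _ _
  | succ d IH =>
    intro V _ _ _ G hmul hnil hd l hl hlen
    rcases le_or_gt (finrank K V) d with h | h
    · exact IH V G hmul hnil h l hl hlen
    have hfr : finrank K V = d + 1 := le_antisymm hd h
    by_cases hex : ∃ U : Submodule K V, (∀ g ∈ G, ∀ v ∈ U, g v ∈ U) ∧ U ≠ ⊥ ∧ U ≠ ⊤
    · -- reducible case
      obtain ⟨U, hGU, hUbot, hUtop⟩ := hex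
      -- span elements preserve U
      have hS_inv : ∀ s ∈ Submodule.span K ((fun g => g - 1) '' G), ∀ v ∈ U, s v ∈ U := by
        intro s hs
        induction hs using Submodule.span_induction with
        | mem x hx =>
          obtain ⟨g, hg, rfl⟩ := hx
          intro v hv
          simpa [LinearMap.sub_apply] using U.sub_mem (hGU g hg v hv) hv
        | zero => intro v hv; simpa using U.zero_mem
        | add a b _ _ ha hb => intro v hv; simpa [LinearMap.add_apply] using U.add_mem (ha v hv) (hb v hv)
        | smul c a _ ha => intro v hv; simpa [LinearMap.smul_apply] using U.smul_mem c (ha v hv)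
      have hle : ∀ g ∈ G, U ≤ U.comap g := fun g hg v hv => hGU g hg v hv
      -- quotient side
      set GQ : Set (Module.End K (V ⧸ U)) :=
        {x | ∃ g ∈ G, ∀ v : V, x (U.mkQ v) = U.mkQ (g v)} with hGQ
      have hGQmul : ∀ x ∈ GQ, ∀ y ∈ GQ, x * y ∈ GQ := by
        rintro x ⟨g, hg, hx⟩ y ⟨h', hh', hy⟩
        exact ⟨g * h', hmul g hg h' hh', fun v => by
          simp only [Module.End.mul_apply, hy v, hx (h' v)]⟩
      have hGQnil : ∀ x ∈ GQ, IsNilpotent (x - 1) := by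
        rintro x ⟨g, hg, hx⟩
        obtain ⟨m, hm⟩ := hnil g hg
        have key : ∀ (k : ℕ) (v : V), ((x - 1) ^ k) (U.mkQ v) = U.mkQ (((g - 1) ^ k) v) := by
          intro k
          induction k with
          | zero => intro v; simp
          | succ k ihk =>
            intro v
            rw [pow_succ, pow_succ, Module.End.mul_apply, Module.End.mul_apply]
            have h1 : (x - 1) (U.mkQ v) = U.mkQ ((g - 1) v) := by
              simp only [LinearMap.sub_apply, Module.End.one_apply, map_sub]
              rw [hx v]
            rw [h1, ihk]
        refine ⟨m, LinearMap.ext fun w => ?_⟩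
        obtain ⟨v, rfl⟩ := U.mkQ_surjective w
        rw [key m v, hm]
        simp
      have hQ : ∀ s ∈ Submodule.span K ((fun g => g - 1) '' G),
          ∃ x ∈ Submodule.span K ((fun g => g - 1) '' GQ),
            ∀ v : V, x (U.mkQ v) = U.mkQ (s v) := by
        intro s hs
        induction hs using Submodule.span_induction with
        | mem y hy =>
          obtain ⟨g, hg, rfl⟩ := hy
          refine ⟨U.mapQ U g (hle g hg) - 1, Submodule.subset_span ⟨U.mapQ U g (hle g hg),
            ⟨g, hg, fun v => by simp [Submodule.mapQ_apply]⟩, rfl⟩, fun v => ?_⟩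
          simp [LinearMap.sub_apply, Submodule.mapQ_apply, map_sub]
        | zero => exact ⟨0, Submodule.zero_mem _, fun v => by simp⟩
        | add a b _ _ ha hb =>
          obtain ⟨xa, hxa, ha'⟩ := ha
          obtain ⟨xb, hxb, hb'⟩ := hb
          exact ⟨xa + xb, Submodule.add_mem _ hxa hxb, fun v => by
            simp only [LinearMap.add_apply, map_add]; rw [ha' v, hb' v]⟩
        | smul c a _ ha =>
          obtain ⟨xa, hxa, ha'⟩ := ha
          exact ⟨c • xa, Submodule.smul_mem _ c hxa, fun v => by
            simp only [LinearMap.smul_apply, map_smul]; rw [ha' v]⟩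
      have hQl : ∀ l₂ : List (Module.End K V),
          (∀ x ∈ l₂, x ∈ Submodule.span K ((fun g => g - 1) '' G)) →
          ∃ lQ : List (Module.End K (V ⧸ U)), lQ.length = l₂.length ∧
            (∀ x ∈ lQ, x ∈ Submodule.span K ((fun g => g - 1) '' GQ)) ∧
            ∀ v : V, lQ.prod (U.mkQ v) = U.mkQ (l₂.prod v) := by
        intro l₂ hl₂
        induction l₂ with
        | nil => exact ⟨[], rfl, by simp, fun v => by simp⟩
        | cons s t iht =>
          obtain ⟨lQ', hlen', hmem', hprod'⟩ := iht (fun x hx => hl₂ x (List.mem_cons_of_mem s hx))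
          obtain ⟨x, hxmem, hx⟩ := hQ s (hl₂ s List.mem_cons_self)
          refine ⟨x :: lQ', by simp [hlen'], ?_, fun v => ?_⟩
          · intro y hy
            rcases List.mem_cons.mp hy with rfl | hy
            · exact hxmem
            · exact hmem' y hy
          · rw [List.prod_cons, List.prod_cons, Module.End.mul_apply, Module.End.mul_apply,
              hprod' v, hx (t.prod v)]
      -- restriction side
      have hmapsTo : ∀ g ∈ G, Set.MapsTo g U U := fun g hg v hv => hGU g hg v hv
      set GR : Set (Module.End K U) :=
        {x | ∃ g ∈ G, ∀ v : U, (x v : V) = g (v : V)} with hGR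
      have hGRmul : ∀ x ∈ GR, ∀ y ∈ GR, x * y ∈ GR := by
        rintro x ⟨g, hg, hx⟩ y ⟨h', hh', hy⟩
        exact ⟨g * h', hmul g hg h' hh', fun v => by
          simp only [Module.End.mul_apply, hx (y v), hy v]⟩
      have hGRnil : ∀ x ∈ GR, IsNilpotent (x - 1) := by
        rintro x ⟨g, hg, hx⟩
        obtain ⟨m, hm⟩ := hnil g hg
        have key : ∀ (k : ℕ) (v : U), ((((x - 1) ^ k) v : V)) = ((g - 1) ^ k) (v : V) := by
          intro k
          induction k with
          | zero => intro v; simp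
          | succ k ihk =>
            intro v
            rw [pow_succ, pow_succ, Module.End.mul_apply, Module.End.mul_apply, ihk]
            congr 1
            simp [LinearMap.sub_apply, hx v]
        refine ⟨m, LinearMap.ext fun v => ?_⟩
        apply Subtype.ext
        rw [key m v, hm]
        simp
      have hR : ∀ s ∈ Submodule.span K ((fun g => g - 1) '' G),
          ∃ x ∈ Submodule.span K ((fun g => g - 1) '' GR),
            ∀ v : U, (x v : V) = s (v : V) := by
        intro s hs
        induction hs using Submodule.span_induction with
        | mem y hy =>
          obtain ⟨g, hg, rfl⟩ := hy
          refine ⟨g.restrict (hmapsTo g hg) - 1, Submodule.subset_span ⟨g.restrict (hmapsTo g hg),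
            ⟨g, hg, fun v => rfl⟩, rfl⟩, fun v => ?_⟩
          simp [LinearMap.sub_apply, LinearMap.restrict_apply]
          rfl
        | zero => exact ⟨0, Submodule.zero_mem _, fun v => by simp⟩
        | add a b _ _ ha hb =>
          obtain ⟨xa, hxa, ha'⟩ := ha
          obtain ⟨xb, hxb, hb'⟩ := hb
          exact ⟨xa + xb, Submodule.add_mem _ hxa hxb, fun v => by
            simp only [LinearMap.add_apply, Submodule.coe_add]; rw [ha' v, hb' v]⟩
        | smul c a _ ha =>
          obtain ⟨xa, hxa, ha'⟩ := ha
          exact ⟨c • xa, Submodule.smul_mem _ c hxa, fun v => by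
            simp only [LinearMap.smul_apply, Submodule.coe_smul]; rw [ha' v]⟩
      have hRl : ∀ l₁ : List (Module.End K V),
          (∀ x ∈ l₁, x ∈ Submodule.span K ((fun g => g - 1) '' G)) →
          ∃ lR : List (Module.End K U), lR.length = l₁.length ∧
            (∀ x ∈ lR, x ∈ Submodule.span K ((fun g => g - 1) '' GR)) ∧
            ∀ v : U, (lR.prod v : V) = l₁.prod (v : V) := by
        intro l₁ hl₁
        induction l₁ with
        | nil => exact ⟨[], rfl, by simp, fun v => by simp⟩
        | cons s t iht =>
          obtain ⟨lR', hlen', hmem', hprod'⟩ := iht (fun x hx => hl₁ x (List.mem_cons_of_mem s hx))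
          obtain ⟨x, hxmem, hx⟩ := hR s (hl₁ s List.mem_cons_self)
          refine ⟨x :: lR', by simp [hlen'], ?_, fun v => ?_⟩
          · intro y hy
            rcases List.mem_cons.mp hy with rfl | hy
            · exact hxmem
            · exact hmem' y hy
          · rw [List.prod_cons, List.prod_cons, Module.End.mul_apply, Module.End.mul_apply,
              hx (lR'.prod v), hprod' v]
      -- dimensions
      have hUnontriv : Nontrivial U := Submodule.nontrivial_iff_ne_bot.mpr hUbot
      have he1 : 1 ≤ finrank K U := Module.finrank_pos_iff.mpr hUnontriv
      have hQnontriv : Nontrivial (V ⧸ U) :=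
        Submodule.Quotient.nontrivial_iff.mpr hUtop
      have hq1 : 1 ≤ finrank K (V ⧸ U) := Module.finrank_pos_iff.mpr hQnontriv
      have hsum : finrank K (V ⧸ U) + finrank K U = d + 1 := by
        rw [← hfr]; exact Submodule.finrank_quotient_add_finrank U
      set q := finrank K (V ⧸ U) with hqdef
      set e := finrank K U with hedef
      -- split the list
      set k := l.length - q with hk
      have hlen2 : (l.drop k).length = q := by
        simp only [List.length_drop, hk]
        omega
      have hlen1 : e ≤ (l.take k).length := by
        simp only [List.length_take, hk]
        omega
      obtain ⟨lQ, hlQlen, hlQmem, hlQprod⟩ := hQl (l.drop k)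
        (fun x hx => hl x (List.mem_of_mem_drop hx))
      obtain ⟨lR, hlRlen, hlRmem, hlRprod⟩ := hRl (l.take k)
        (fun x hx => hl x (List.mem_of_mem_take hx))
      have hQzero : lQ.prod = 0 := by
        apply IH (V ⧸ U) GQ hGQmul hGQnil (by omega) lQ hlQmem
        rw [hlQlen, hlen2]
      have hRzero : lR.prod = 0 := by
        apply IH U GR hGRmul hGRnil (by omega) lR hlRmem
        rw [hlRlen]
        exact le_trans (by omega) hlen1
      -- conclude
      have hsplit : l.prod = (l.take k).prod * (l.drop k).prod := by
        rw [← List.prod_append, List.take_append_drop]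
      ext v
      rw [hsplit, Module.End.mul_apply]
      have hmem : (l.drop k).prod v ∈ U := by
        have := hlQprod v
        rw [hQzero] at this
        simp only [LinearMap.zero_apply] at this
        exact (Submodule.Quotient.mk_eq_zero U).mp (by rw [← Submodule.mkQ_apply, ← this])
      have := hlRprod ⟨(l.drop k).prod v, hmem⟩
      rw [hRzero] at this
      simp only [LinearMap.zero_apply, Submodule.coe_zero] at this
      rw [LinearMap.zero_apply, ← this]
    · -- irreducible case
      have hirr : ∀ U : Submodule K V, (∀ g ∈ G, ∀ v ∈ U, g v ∈ U) → U = ⊥ ∨ U = ⊤ := by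
        intro U hU
        by_contra hcon
        push_neg at hcon
        exact hex ⟨U, hU, hcon.1, hcon.2⟩
      have hone := irreducible_unipotent_eq_one G hmul hnil hirr (by omega)
      have hzero : ∀ x ∈ l, x = 0 := by
        intro x hx
        have hmem := hl x hx
        have him : (fun g => g - 1) '' G ⊆ {0} := by
          rintro y ⟨g, hg, rfl⟩
          simp [hone g hg]
        have := Submodule.span_mono him hmem
        simpa using (by rwa [Submodule.span_zero_singleton] at this : x ∈ (⊥ : Submodule K (Module.End K V)))
      cases l with
      | nil => simp at hlen; omega
      | cons x t =>
        rw [List.prod_cons, hzero x List.mem_cons_self, zero_mul]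

end Main


open Matrix

/-- For a unipotent subgroup `H ≤ GL(n,F)`, the `F`-linear span of `{h - 1 : h ∈ H}` is
closed under multiplication, and is nilpotent of index at most `n`. -/
theorem stmt12 {n : ℕ} {F : Type*} [Field F] (H : Subgroup (GL (Fin n) F))
    (hH : ∀ h ∈ H, ((h : Matrix (Fin n) (Fin n) F) - 1) ^ n = 0) :
    (∀ a ∈ Submodule.span F
        {y : Matrix (Fin n) (Fin n) F | ∃ h ∈ H, y = (h : Matrix (Fin n) (Fin n) F) - 1},
     ∀ b ∈ Submodule.span F
        {y : Matrix (Fin n) (Fin n) F | ∃ h ∈ H, y = (h : Matrix (Fin n) (Fin n) F) - 1},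
      a * b ∈ Submodule.span F
        {y : Matrix (Fin n) (Fin n) F | ∃ h ∈ H, y = (h : Matrix (Fin n) (Fin n) F) - 1}) ∧
    (∀ l : List (Matrix (Fin n) (Fin n) F),
      (∀ x ∈ l, x ∈ Submodule.span F
        {y : Matrix (Fin n) (Fin n) F | ∃ h ∈ H, y = (h : Matrix (Fin n) (Fin n) F) - 1}) →
      l.length = n → l.prod = 0) := by
  set S₀ : Set (Matrix (Fin n) (Fin n) F) :=
    {y | ∃ h ∈ H, y = (h : Matrix (Fin n) (Fin n) F) - 1} with hS₀
  constructor
  · -- closure under multiplication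
    have hgen : ∀ a ∈ S₀, ∀ b ∈ Submodule.span F S₀, a * b ∈ Submodule.span F S₀ := by
      rintro a ⟨g, hg, rfl⟩ b hb
      induction hb using Submodule.span_induction with
      | mem y hy =>
        obtain ⟨h', hh', rfl⟩ := hy
        have hmem : ((g : Matrix (Fin n) (Fin n) F) * h') - 1 ∈ S₀ :=
          ⟨g * h', H.mul_mem hg hh', by simp [Units.val_mul]⟩
        have hexp : ((g : Matrix (Fin n) (Fin n) F) - 1) * ((h' : Matrix (Fin n) (Fin n) F) - 1) =
            (((g : Matrix (Fin n) (Fin n) F) * h') - 1) - ((g : Matrix (Fin n) (Fin n) F) - 1)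
              - ((h' : Matrix (Fin n) (Fin n) F) - 1) := by noncomm_ring
        rw [hexp]
        exact Submodule.sub_mem _ (Submodule.sub_mem _ (Submodule.subset_span hmem)
          (Submodule.subset_span ⟨g, hg, rfl⟩)) (Submodule.subset_span ⟨h', hh', rfl⟩)
      | zero => rw [mul_zero]; exact Submodule.zero_mem _
      | add x y _ _ hx hy => rw [mul_add]; exact Submodule.add_mem _ hx hy
      | smul c x _ hx => rw [mul_smul_comm]; exact Submodule.smul_mem _ c hx
    intro a ha b hb
    induction ha using Submodule.span_induction with
    | mem x hx => exact hgen x hx b hb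
    | zero => rw [zero_mul]; exact Submodule.zero_mem _
    | add x y _ _ hx hy => rw [add_mul]; exact Submodule.add_mem _ hx hy
    | smul c x _ hx => rw [smul_mul_assoc]; exact Submodule.smul_mem _ c hx
  · -- nilpotency
    intro l hl hlen
    set K := AlgebraicClosure F with hK
    set φ : Matrix (Fin n) (Fin n) F →+* Matrix (Fin n) (Fin n) K :=
      (algebraMap F K).mapMatrix with hφ
    have hφinj : Function.Injective φ := by
      intro M N h
      ext i j
      exact (algebraMap F K).injective (by
        have := congrFun (congrFun (congrArg (fun (M : Matrix (Fin n) (Fin n) K) => (M : Fin n → Fin n → K)) h) i) j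
        simpa [hφ, Matrix.map_apply] using this)
    set ψ : Matrix (Fin n) (Fin n) K ≃ₐ[K] Module.End K (Fin n → K) :=
      Matrix.toLinAlgEquiv' with hψ
    set G : Set (Module.End K (Fin n → K)) :=
      {x | ∃ h ∈ H, x = ψ (φ (h : Matrix (Fin n) (Fin n) F))} with hG
    have hGmul : ∀ x ∈ G, ∀ y ∈ G, x * y ∈ G := by
      rintro x ⟨g, hg, rfl⟩ y ⟨h', hh', rfl⟩
      exact ⟨g * h', H.mul_mem hg hh', by rw [Units.val_mul, _root_.map_mul, _root_.map_mul]⟩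
    have hGnil : ∀ x ∈ G, IsNilpotent (x - 1) := by
      rintro x ⟨h', hh', rfl⟩
      refine ⟨n, ?_⟩
      have h1 : ψ (φ (h' : Matrix (Fin n) (Fin n) F)) - 1 =
          ψ (φ ((h' : Matrix (Fin n) (Fin n) F) - 1)) := by
        rw [_root_.map_sub, _root_.map_sub, _root_.map_one, _root_.map_one]
      rw [h1, ← _root_.map_pow, ← _root_.map_pow, hH h' hh', _root_.map_zero, _root_.map_zero]
    have hsmul : ∀ (c : F) (x : Matrix (Fin n) (Fin n) F),
        φ (c • x) = algebraMap F K c • φ x := by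
      intro c x
      ext i j
      simp [hφ, Matrix.map_apply, Matrix.smul_apply, smul_eq_mul, _root_.map_mul]
    have hspanmap : ∀ a ∈ Submodule.span F S₀,
        ψ (φ a) ∈ Submodule.span K ((fun g => g - 1) '' G) := by
      intro a ha
      induction ha using Submodule.span_induction with
      | mem y hy =>
        obtain ⟨h', hh', rfl⟩ := hy
        have : ψ (φ ((h' : Matrix (Fin n) (Fin n) F) - 1)) =
            ψ (φ (h' : Matrix (Fin n) (Fin n) F)) - 1 := by
          rw [_root_.map_sub, _root_.map_sub, _root_.map_one, _root_.map_one]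
        rw [this]
        exact Submodule.subset_span ⟨ψ (φ (h' : Matrix (Fin n) (Fin n) F)), ⟨h', hh', rfl⟩, rfl⟩
      | zero => rw [_root_.map_zero, _root_.map_zero]; exact Submodule.zero_mem _
      | add x y _ _ hx hy => rw [_root_.map_add, _root_.map_add]; exact Submodule.add_mem _ hx hy
      | smul c x _ hx =>
        rw [hsmul c x, _root_.map_smul]
        exact Submodule.smul_mem _ _ hx
    set lK : List (Module.End K (Fin n → K)) := l.map (fun m => ψ (φ m)) with hlK
    have hKmem : ∀ x ∈ lK, x ∈ Submodule.span K ((fun g => g - 1) '' G) := by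
      intro x hx
      obtain ⟨m, hm, rfl⟩ := List.mem_map.mp hx
      exact hspanmap m (hl m hm)
    have hfrk : finrank K (Fin n → K) = n := Module.finrank_fin_fun K
    have hprod0 : lK.prod = 0 := by
      apply main_induction n (Fin n → K) G hGmul hGnil (le_of_eq hfrk) lK hKmem
      rw [hfrk, hlK]
      simp [hlen]
    set ρ : Matrix (Fin n) (Fin n) F →+* Module.End K (Fin n → K) :=
      (ψ.toAlgHom.toRingHom).comp φ with hρ
    have hmapprod : ψ (φ l.prod) = lK.prod := by
      have h1 : ρ l.prod = (l.map ρ).prod := map_list_prod ρ l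
      have h2 : l.map ρ = lK := by
        simp only [hlK, hρ]
        rfl
      rw [← h2, ← h1]
      rfl
    rw [hprod0] at hmapprod
    have hφ0 : φ l.prod = 0 := by
      apply ψ.injective
      rw [hmapprod, _root_.map_zero]
    apply hφinj
    rw [hφ0, _root_.map_zero]
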